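/- arXiv:1810.08263 — 6 statements merged into one kernel-verified Lean document; each statement's English description precedes it below -/
import Mathlib

section
/- For any two distinct injective functions f, g from {1,...,n} to {1,...,n+1} that differ in exactly one coordinate, the unique permutation extensions of f and g to {1,...,n+1} have opposite parity (sign). -/
/-- If two injective functions `f, g : {1,...,n} → {1,...,n+1}` differ in
exactly one coordinate, then their unique permutation extensions have opposite
parity (sign). -/
theorem opposite_parity_of_differ_one (n : ℕ) (f g : Fin n → Fin (n + 1))
    (hf : Function.Injective f) (hg : Function.Injective g)
    (πf πg : Equiv.Perm (Fin (n + 1)))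
    (hπf : ∀ i : Fin n, πf i.castSucc = f i)
    (hπg : ∀ i : Fin n, πg i.castSucc = g i)
    (hdiff : ∃! i : Fin n, f i ≠ g i) :
    Equiv.Perm.sign πf = -Equiv.Perm.sign πg := by
  obtain ⟨i₀, hi₀, huniq⟩ := hdiff
  set σ : Equiv.Perm (Fin (n + 1)) := πg⁻¹ * πf with hσ
  have hfix : ∀ j : Fin n, j ≠ i₀ → σ j.castSucc = j.castSucc := by
    intro j hj
    have hfg : f j = g j := by
      by_contra h
      exact hj (huniq j h)
    simp [hσ, Equiv.Perm.mul_apply, hπf, hfg, ← hπg]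
  have hne : σ i₀.castSucc ≠ i₀.castSucc := by
    intro h
    apply hi₀
    have : πf i₀.castSucc = πg i₀.castSucc := by
      have := congrArg πg h
      simpa [hσ, Equiv.Perm.mul_apply] using this
    rw [hπf, hπg] at this
    exact this
  have hlast : σ i₀.castSucc = Fin.last n := by
    rcases Fin.eq_castSucc_or_eq_last (σ i₀.castSucc) with ⟨j, hj⟩ | h
    · by_cases hji : j = i₀
      · exact absurd (hj.trans (by rw [hji])) hne
      · have := hfix j hji
        have : σ i₀.castSucc = σ j.castSucc := by rw [this, hj]
        have := σ.injective this
        exact absurd (Fin.castSucc_injective n this) (by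
          intro h'; exact hji h'.symm)
    · exact h
  have hlast2 : σ (Fin.last n) = i₀.castSucc := by
    rcases Fin.eq_castSucc_or_eq_last (σ (Fin.last n)) with ⟨j, hj⟩ | h
    · by_cases hji : j = i₀
      · rw [hj, hji]
      · have h1 := hfix j hji
        have : σ (Fin.last n) = σ j.castSucc := by rw [h1, hj]
        have := σ.injective this
        exact absurd this (Fin.castSucc_lt_last j).ne'
    · have : σ (Fin.last n) = σ i₀.castSucc := by rw [h, hlast]
      have := σ.injective this
      exact absurd this (Fin.castSucc_lt_last i₀).ne'
  have hswap : σ = Equiv.swap i₀.castSucc (Fin.last n) := by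
    ext x
    rcases Fin.eq_castSucc_or_eq_last x with ⟨j, hj⟩ | h
    · by_cases hji : j = i₀
      · subst hj; rw [hji, hlast, Equiv.swap_apply_left]
      · subst hj
        rw [hfix j hji, Equiv.swap_apply_of_ne_of_ne]
        · exact fun h' => hji (Fin.castSucc_injective n h')
        · exact (Fin.castSucc_lt_last j).ne
    · subst h; rw [hlast2, Equiv.swap_apply_right]
  have hπ : πf = πg * σ := by
    rw [hσ]; group
  rw [hπ, Equiv.Perm.sign_mul, hswap,
    Equiv.Perm.sign_swap (Fin.castSucc_lt_last i₀).ne]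
  exact mul_neg_one _
end

section
/- If m is odd, m ≥ 5, and c = (m+1)/2 (the inverse of 2 mod m), then for all distinct a, b ∈ Z/m, c(a+b) is distinct from both a and b; consequently the set {(a, b, c(a+b) mod m) : a ≠ b} is an independent set of size m(m-1) in the arrangement graph A_{m,3}. -/
/-- For odd `m ≥ 5` and `c = (m+1)/2` (the inverse of `2` mod `m`): for all
distinct `a, b ∈ ℤ/m`, `c(a+b)` is distinct from both `a` and `b`;
consequently `{(a, b, c(a+b)) : a ≠ b}` is a set of `m(m-1)` triples of
pairwise distinct elements of `ℤ/m` that is an independent set in the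
arrangement graph `A_{m,3}` (no two distinct triples differ in exactly one
coordinate). -/
theorem halving_independent_set (m : ℕ) [NeZero m] (hm : Odd m) (hm5 : 5 ≤ m) :
    let c : ZMod m := (((m + 1) / 2 : ℕ) : ZMod m)
    let S : Finset (ZMod m × ZMod m × ZMod m) :=
      (Finset.univ.filter fun p : ZMod m × ZMod m => p.1 ≠ p.2).image
        fun p => (p.1, p.2, c * (p.1 + p.2))
    (∀ a b : ZMod m, a ≠ b → c * (a + b) ≠ a ∧ c * (a + b) ≠ b) ∧
    S.card = m * (m - 1) ∧
    ∀ t ∈ S, ∀ s ∈ S, t ≠ s →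
      ¬((t.1 ≠ s.1 ∧ t.2.1 = s.2.1 ∧ t.2.2 = s.2.2) ∨
        (t.1 = s.1 ∧ t.2.1 ≠ s.2.1 ∧ t.2.2 = s.2.2) ∨
        (t.1 = s.1 ∧ t.2.1 = s.2.1 ∧ t.2.2 ≠ s.2.2)) := by
  intro c S
  have h2c : (2 : ZMod m) * c = 1 := by
    have hnat : 2 * ((m + 1) / 2) = m + 1 := by
      obtain ⟨k, hk⟩ := hm; omega
    have : ((2 * ((m + 1) / 2) : ℕ) : ZMod m) = ((m + 1 : ℕ) : ZMod m) := by rw [hnat]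
    simpa [ZMod.natCast_self] using this
  have hcinj : ∀ x y : ZMod m, c * x = c * y → x = y := by
    intro x y h
    have := congrArg (fun z => (2 : ZMod m) * z) h
    simpa [← mul_assoc, h2c] using this
  have hmain : ∀ a b : ZMod m, a ≠ b → c * (a + b) ≠ a ∧ c * (a + b) ≠ b := by
    intro a b hab
    constructor
    · intro h
      apply hab
      have h2 : (2 : ZMod m) * (c * (a + b)) = 2 * a := by rw [h]
      rw [← mul_assoc, h2c, one_mul] at h2
      have : b = a := by linear_combination h2
      exact this.symm
    · intro h
      apply hab
      have h2 : (2 : ZMod m) * (c * (a + b)) = 2 * b := by rw [h]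
      rw [← mul_assoc, h2c, one_mul] at h2
      linear_combination h2
  refine ⟨hmain, ?_, ?_⟩
  · have hinj : Set.InjOn (fun p : ZMod m × ZMod m => (p.1, p.2, c * (p.1 + p.2)))
        ↑(Finset.univ.filter fun p : ZMod m × ZMod m => p.1 ≠ p.2) := by
      intro p _ q _ h
      have h1 : p.1 = q.1 := congrArg (fun t => t.1) h
      have h2 : p.2 = q.2 := congrArg (fun t => t.2.1) h
      exact Prod.ext h1 h2
    have : S.card = (Finset.univ.filter fun p : ZMod m × ZMod m => p.1 ≠ p.2).card :=
      Finset.card_image_of_injOn hinj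
    rw [this]
    have hfil : (Finset.univ.filter fun p : ZMod m × ZMod m => p.1 ≠ p.2)
        = (Finset.univ : Finset (ZMod m)).offDiag := by
      ext p
      simp [Finset.mem_offDiag]
    rw [hfil, Finset.offDiag_card]
    simp only [Finset.card_univ, ZMod.card]
    cases m with
    | zero => simp
    | succ n => simp [Nat.succ_sub_one, Nat.mul_sub_one]; ring_nf; omega
  · intro t ht s hs hts
    simp only [S, Finset.mem_image, Finset.mem_filter] at ht hs
    obtain ⟨⟨a, b⟩, ⟨-, hab⟩, rfl⟩ := ht
    obtain ⟨⟨a', b'⟩, ⟨-, hab'⟩, rfl⟩ := hs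
    simp only at *
    rintro (⟨h1, h2, h3⟩ | ⟨h1, h2, h3⟩ | ⟨h1, h2, h3⟩)
    · subst h2
      have := hcinj _ _ h3
      exact h1 (by linear_combination this)
    · subst h1
      have := hcinj _ _ h3
      exact h2 (by linear_combination this)
    · subst h1; subst h2; exact h3 rfl
end

section
/- If there exists an independent set of size (n+k)!/(k+1)! in the arrangement graph A_{n+k,n} with n ≥ 2, then there exists an independent set of size (n-1+k)!/(k+1)! in A_{n-1+k,n-1}. -/
/-- The arrangement graph `A_{m,n}`: vertices are injective functions
`{1..n} → {1..m}`, adjacent iff they differ in exactly one position. -/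
def arrangementGraph (m n : ℕ) :
    SimpleGraph {f : Fin n → Fin m // Function.Injective f} where
  Adj f g := ∃! i : Fin n, f.1 i ≠ g.1 i
  symm := by
    constructor
    rintro f g ⟨i, hi, hu⟩
    exact ⟨i, fun h => hi h.symm, fun j hj => hu j fun h => hj h.symm⟩
  loopless := by
    constructor
    rintro f ⟨i, hi, -⟩
    exact hi rfl

/-- A set of vertices is independent if no two of its members are adjacent. -/
def IsIndep {V : Type*} (G : SimpleGraph V) (S : Set V) : Prop :=
  ∀ a ∈ S, ∀ b ∈ S, ¬ G.Adj a b

lemma card_inj_fun (a b : ℕ) :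
    Fintype.card {f : Fin a → Fin b // Function.Injective f} = b.descFactorial a := by
  rw [Fintype.card_congr (Equiv.subtypeInjectiveEquivEmbedding (Fin a) (Fin b)),
    Fintype.card_embedding_eq, Fintype.card_fin, Fintype.card_fin]

lemma card_subtype_ne' {b : ℕ} (v : Fin b) :
    Fintype.card {w : Fin b // w ≠ v} = b - 1 := by
  rw [Fintype.card_subtype]
  rw [show (Finset.univ.filter fun w : Fin b => w ≠ v) = Finset.univ.erase v from
    Finset.filter_ne' _ _]
  simp

lemma card_inj_avoid (a b : ℕ) (v : Fin b) :
    (Finset.univ.filter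
      (fun g : {f : Fin a → Fin b // Function.Injective f} => ∀ j, g.1 j ≠ v)).card
      = (b - 1).descFactorial a := by
  rw [← Fintype.card_subtype]
  have e : {g : {f : Fin a → Fin b // Function.Injective f} // ∀ j, g.1 j ≠ v} ≃
      (Fin a ↪ {w : Fin b // w ≠ v}) :=
    { toFun := fun g => ⟨fun j => ⟨g.1.1 j, g.2 j⟩,
        fun s t h => g.1.2 (congrArg Subtype.val h)⟩
      invFun := fun f => ⟨⟨fun j => (f j).1,
        fun s t h => f.injective (Subtype.ext h)⟩, fun j => (f j).2⟩
      left_inv := fun g => by apply Subtype.ext; apply Subtype.ext; rfl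
      right_inv := fun f => by ext j; rfl }
  rw [Fintype.card_congr e, Fintype.card_embedding_eq, Fintype.card_fin, card_subtype_ne']

/-- restriction of an arrangement, forgetting position `i`. -/
def restr (p k : ℕ) (i : Fin (p + 2))
    (x : {f : Fin (p + 2) → Fin (p + 2 + k) // Function.Injective f}) :
    {g : Fin (p + 1) → Fin (p + 2 + k) // Function.Injective g} :=
  ⟨x.1 ∘ i.succAbove, x.2.comp Fin.succAbove_right_injective⟩

/-- truncation: drop the last coordinate and shrink the codomain (junk value if
the function takes the maximal value somewhere off the last coordinate). -/
def trunc (p k : ℕ) (x : {f : Fin (p + 2) → Fin (p + 2 + k) // Function.Injective f}) :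
    {f : Fin (p + 1) → Fin (p + 1 + k) // Function.Injective f} :=
  if h : ∀ j : Fin (p + 1), (x.1 (Fin.castSucc j)).1 < p + 1 + k then
    ⟨fun j => ⟨(x.1 (Fin.castSucc j)).1, h j⟩, by
      intro s t hst
      simp only [Fin.mk.injEq] at hst
      exact Fin.castSucc_injective _ (x.2 (Fin.ext hst))⟩
  else ⟨fun j => ⟨j.1, by omega⟩, by
      intro s t hst
      simp only [Fin.mk.injEq] at hst
      exact Fin.ext hst⟩

lemma trunc_apply (p k : ℕ) (x : {f : Fin (p + 2) → Fin (p + 2 + k) // Function.Injective f})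
    (h : ∀ j : Fin (p + 1), (x.1 (Fin.castSucc j)).1 < p + 1 + k) (j : Fin (p + 1)) :
    ((trunc p k x).1 j).1 = (x.1 (Fin.castSucc j)).1 := by
  unfold trunc
  rw [dif_pos h]

/-- If there is a perfect independent set (one of size `(n+k)!/(k+1)!`) in
`A_{n+k,n}` with `n ≥ 2`, then there is one of size `(n-1+k)!/(k+1)!` in
`A_{n-1+k,n-1}`. -/
theorem perfect_indep_downward (n k : ℕ) (hn : 2 ≤ n)
    (X : Finset {f : Fin n → Fin (n + k) // Function.Injective f})
    (hX : IsIndep (arrangementGraph (n + k) n) ↑X)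
    (hcard : X.card = (n + k).factorial / (k + 1).factorial) :
    ∃ Y : Finset {f : Fin (n - 1) → Fin (n - 1 + k) // Function.Injective f},
      IsIndep (arrangementGraph (n - 1 + k) (n - 1)) ↑Y ∧
      Y.card = (n - 1 + k).factorial / (k + 1).factorial := by
  obtain ⟨p, rfl⟩ : ∃ p, n = p + 2 := ⟨n - 2, by omega⟩
  clear hn
  have hcard' : X.card = (p + 2 + k).descFactorial (p + 1) := by
    rw [hcard, Nat.descFactorial_eq_div (by omega : p + 1 ≤ p + 2 + k),
      show p + 2 + k - (p + 1) = k + 1 from by omega]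
  -- injectivity of restriction on X
  have hRinj : ∀ (i : Fin (p + 2)), ∀ x ∈ X, ∀ y ∈ X, restr p k i x = restr p k i y → x = y := by
    intro i x hx y hy hxy
    by_contra hne
    have hagree : ∀ j : Fin (p + 2), j ≠ i → x.1 j = y.1 j := by
      intro j hj
      obtain ⟨t, ht⟩ := Fin.exists_succAbove_eq hj
      have h1 := congrFun (congrArg Subtype.val hxy) t
      simpa [restr, ht] using h1
    have hdi : x.1 i ≠ y.1 i := by
      intro h
      apply hne
      apply Subtype.ext
      funext j
      by_cases hji : j = i
      · rw [hji, h]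
      · exact hagree j hji
    exact hX x (Finset.mem_coe.mpr hx) y (Finset.mem_coe.mpr hy)
      ⟨i, hdi, fun j hj => by by_contra hji; exact hj (hagree j hji)⟩
  -- surjectivity of restriction from X (via cardinality)
  have hRsurj : ∀ (i : Fin (p + 2))
      (g : {g : Fin (p + 1) → Fin (p + 2 + k) // Function.Injective g}),
      ∃ x ∈ X, restr p k i x = g := by
    intro i g
    have himg : X.image (restr p k i) = Finset.univ := by
      apply Finset.eq_univ_of_card
      rw [Finset.card_image_of_injOn
        (fun x hx y hy => hRinj i x (Finset.mem_coe.mp hx) y (Finset.mem_coe.mp hy)),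
        hcard', card_inj_fun]
    have hg : g ∈ X.image (restr p k i) := himg ▸ Finset.mem_univ g
    simpa using hg
  set vmax : Fin (p + 2 + k) := ⟨p + 1 + k, by omega⟩ with hvmax
  set B := (X.filter (fun x => ∀ j, x.1 j ≠ vmax)).card with hB
  -- equation 1: for each direction i
  have h1 : ∀ i : Fin (p + 2),
      (X.filter (fun x => x.1 i = vmax)).card + B = (p + 1 + k).descFactorial (p + 1) := by
    intro i
    have hdisj : Disjoint (X.filter (fun x => x.1 i = vmax))
        (X.filter (fun x => ∀ j, x.1 j ≠ vmax)) := by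
      rw [Finset.disjoint_left]
      intro x h1 h2
      exact (Finset.mem_filter.mp h2).2 i (Finset.mem_filter.mp h1).2
    rw [hB, ← Finset.card_union_of_disjoint hdisj, ← Finset.filter_or]
    have hbij : (X.filter (fun x => x.1 i = vmax ∨ ∀ j, x.1 j ≠ vmax)).card
        = (Finset.univ.filter
            (fun g : {g : Fin (p + 1) → Fin (p + 2 + k) // Function.Injective g} =>
              ∀ j, g.1 j ≠ vmax)).card := by
      apply Finset.card_bij (fun x _ => restr p k i x)
      · intro x hx
        simp only [Finset.mem_filter] at hx
        simp only [Finset.mem_filter, Finset.mem_univ, true_and]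
        intro j
        rcases hx.2 with h | h
        · intro hc
          simp only [restr, Function.comp] at hc
          exact Fin.succAbove_ne i j (x.2 (hc.trans h.symm))
        · exact h _
      · intro x hx y hy h
        exact hRinj i x (Finset.mem_filter.mp hx).1 y (Finset.mem_filter.mp hy).1 h
      · intro g hg
        obtain ⟨x, hx, rfl⟩ := hRsurj i g
        refine ⟨x, Finset.mem_filter.mpr ⟨hx, ?_⟩, rfl⟩
        by_cases hc : x.1 i = vmax
        · exact Or.inl hc
        · refine Or.inr (fun j => ?_)
          by_cases hji : j = i
          · rw [hji]; exact hc
          · obtain ⟨t, ht⟩ := Fin.exists_succAbove_eq hji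
            have hgt := (Finset.mem_filter.mp hg).2 t
            simpa [restr, ht] using hgt
    rw [hbij, card_inj_avoid, show p + 2 + k - 1 = p + 1 + k from by omega]
  -- equation 2: summing over directions
  have h2 : (∑ i : Fin (p + 2), (X.filter (fun x => x.1 i = vmax)).card) + B
      = (p + 2 + k).descFactorial (p + 1) := by
    have e1 : X.filter (fun x => ∃ j, x.1 j = vmax)
        = Finset.univ.biUnion (fun i : Fin (p + 2) => X.filter (fun x => x.1 i = vmax)) := by
      ext x
      simp only [Finset.mem_filter, Finset.mem_biUnion, Finset.mem_univ, true_and]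
      constructor
      · rintro ⟨hx, j, hj⟩; exact ⟨j, hx, hj⟩
      · rintro ⟨j, hx, hj⟩; exact ⟨hx, j, hj⟩
    have e2 : (X.filter (fun x => ∃ j, x.1 j = vmax)).card
        = ∑ i : Fin (p + 2), (X.filter (fun x => x.1 i = vmax)).card := by
      rw [e1]
      apply Finset.card_biUnion
      intro i _ j _ hij
      rw [Function.onFun, Finset.disjoint_left]
      intro x h1 h2
      exact hij (x.2 ((Finset.mem_filter.mp h1).2.trans (Finset.mem_filter.mp h2).2.symm))
    have e3 : X.filter (fun x => ¬ ∃ j, x.1 j = vmax) = X.filter (fun x => ∀ j, x.1 j ≠ vmax) := by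
      apply Finset.filter_congr
      intro x _
      push_neg
      rfl
    have hsplit := Finset.card_filter_add_card_filter_not
      (s := X) (p := fun x => ∃ j, x.1 j = vmax)
    rw [e2, e3, ← hB, hcard'] at hsplit
    exact hsplit
  -- algebra: each fiber count equals L2
  set A := (X.filter (fun x => x.1 (Fin.last (p + 1)) = vmax)).card with hA
  have hAeq : ∀ i : Fin (p + 2), (X.filter (fun x => x.1 i = vmax)).card = A := by
    intro i
    have e1 := h1 i
    have e2 := h1 (Fin.last (p + 1))
    omega
  have hsum : (p + 2) * A + B = (p + 2 + k).descFactorial (p + 1) := by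
    rw [← h2, Finset.sum_congr rfl (fun i _ => hAeq i), Finset.sum_const, Finset.card_univ,
      Fintype.card_fin, smul_eq_mul]
  set L2 := (p + 1 + k).descFactorial p with hL2
  have hAL : A + B = (k + 1) * L2 := by
    have e : (p + 1 + k).descFactorial (p + 1) = (k + 1) * L2 := by
      rw [Nat.descFactorial_succ, show p + 1 + k - p = k + 1 from by omega]
    rw [← e]
    exact h1 (Fin.last (p + 1))
  have hD : (p + 2 + k).descFactorial (p + 1) = (p + 2 + k) * L2 := by
    rw [show p + 2 + k = p + 1 + k + 1 from by omega]
    exact Nat.succ_descFactorial_succ (p + 1 + k) p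
  have key : A = L2 := by
    have h5 : (p + 1) * A + (A + B) = (p + 1) * L2 + (k + 1) * L2 := by
      calc (p + 1) * A + (A + B) = (p + 2) * A + B := by ring
        _ = (p + 2 + k) * L2 := by rw [hsum, hD]
        _ = (p + 1) * L2 + (k + 1) * L2 := by ring
    rw [hAL] at h5
    exact Nat.eq_of_mul_eq_mul_left (by omega) (Nat.add_right_cancel h5)
  -- the set S of arrangements ending with vmax
  set S := X.filter (fun x => x.1 (Fin.last (p + 1)) = vmax) with hS
  have hcond : ∀ x ∈ S, ∀ j : Fin (p + 1), (x.1 (Fin.castSucc j)).1 < p + 1 + k := by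
    intro x hx j
    obtain ⟨hxX, hxl⟩ := Finset.mem_filter.mp hx
    have hne : x.1 (Fin.castSucc j) ≠ vmax := by
      rw [← hxl]
      intro h
      exact (Fin.castSucc_lt_last j).ne (x.2 h)
    have hlt := (x.1 (Fin.castSucc j)).2
    have hne' : (x.1 (Fin.castSucc j)).1 ≠ p + 1 + k := fun h => hne (Fin.ext h)
    omega
  have hvaliff : ∀ x ∈ S, ∀ y ∈ S, ∀ t : Fin (p + 1),
      ((trunc p k x).1 t = (trunc p k y).1 t ↔ x.1 (Fin.castSucc t) = y.1 (Fin.castSucc t)) := by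
    intro x hx y hy t
    rw [Fin.ext_iff, Fin.ext_iff, trunc_apply p k x (hcond x hx) t,
      trunc_apply p k y (hcond y hy) t]
  refine ⟨S.image (trunc p k), ?_, ?_⟩
  · -- independence
    intro a ha b hb hadj
    obtain ⟨x, hx, rfl⟩ := Finset.mem_image.mp (Finset.mem_coe.mp ha)
    obtain ⟨y, hy, rfl⟩ := Finset.mem_image.mp (Finset.mem_coe.mp hb)
    obtain ⟨j, hj, hu⟩ := hadj
    refine hX x (Finset.mem_coe.mpr (Finset.mem_filter.mp hx).1)
      y (Finset.mem_coe.mpr (Finset.mem_filter.mp hy).1) ⟨Fin.castSucc j, ?_, ?_⟩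
    · intro h
      exact hj (((hvaliff x hx y hy j).mpr h))
    · intro i hi
      have hil : i ≠ Fin.last (p + 1) := by
        intro h
        rw [h, (Finset.mem_filter.mp hx).2, (Finset.mem_filter.mp hy).2] at hi
        exact hi rfl
      obtain ⟨t, ht⟩ := Fin.exists_succAbove_eq hil
      rw [Fin.succAbove_last] at ht
      have hdt : (trunc p k x).1 t ≠ (trunc p k y).1 t := by
        intro h
        exact hi (ht ▸ (hvaliff x hx y hy t).mp h)
      rw [← ht, hu t hdt]
  · -- cardinality
    have hinj : Set.InjOn (trunc p k) ↑S := by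
      intro x hx y hy h
      apply Subtype.ext
      funext i
      by_cases hil : i = Fin.last (p + 1)
      · rw [hil, (Finset.mem_filter.mp (Finset.mem_coe.mp hx)).2,
          (Finset.mem_filter.mp (Finset.mem_coe.mp hy)).2]
      · obtain ⟨t, ht⟩ := Fin.exists_succAbove_eq hil
        rw [Fin.succAbove_last] at ht
        rw [← ht]
        exact (hvaliff x (Finset.mem_coe.mp hx) y (Finset.mem_coe.mp hy) t).mp
          (congrFun (congrArg Subtype.val h) t)
    rw [Finset.card_image_of_injOn hinj]
    show A = (p + 2 - 1 + k).factorial / (k + 1).factorial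
    rw [key, hL2, Nat.descFactorial_eq_div (by omega : p ≤ p + 1 + k),
      show p + 1 + k - p = k + 1 from by omega, show p + 2 - 1 + k = p + 1 + k from by omega]
end

section
/- For n even, the number of injective n-tuples from {1,...,n+2} whose two missing values have different parities and whose associated full permutation (with missing values ordered even-then-odd) is even, equals (1/2)·n!·((n+2)/2)^2, and the ratio of this count to (n+2)!/2 equals 1/4 + 1/(4(n+1)). -/
open Equiv Equiv.Perm Finset

lemma dpc_card_range_filter_odd (M : ℕ) :
    ((Finset.range M).filter (fun x => Odd x)).card = M / 2 := by
  induction M with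
  | zero => simp
  | succ m ih =>
    rw [Finset.range_add_one, Finset.filter_insert]
    by_cases h : Odd m
    · rw [if_pos h, Finset.card_insert_of_notMem (by simp), ih]
      rw [Nat.odd_iff] at h; omega
    · rw [if_neg h, ih]; rw [Nat.odd_iff] at h; omega

lemma dpc_card_fin_filter_odd (M : ℕ) :
    (Finset.univ.filter (fun x : Fin M => Odd x.val)).card = M / 2 := by
  rw [Finset.card_filter, Fin.sum_univ_eq_sum_range (fun i => if Odd i then 1 else 0),
    ← Finset.card_filter, dpc_card_range_filter_odd]

theorem dpc_lt0 (n : ℕ) : n < n + 2 := by omega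
theorem dpc_lt1 (n : ℕ) : n + 1 < n + 2 := by omega
theorem dpc_le (n : ℕ) : n ≤ n + 2 := by omega

section
variable (n : ℕ)

lemma dpc_tri (x : Fin (n + 2)) :
    x.val < n ∨ x = ⟨n, dpc_lt0 n⟩ ∨ x = ⟨n + 1, dpc_lt1 n⟩ := by
  rcases lt_trichotomy x.val n with h | h | h
  · exact Or.inl h
  · exact Or.inr (Or.inl (Fin.ext h))
  · exact Or.inr (Or.inr (Fin.ext (show x.val = n + 1 by omega)))

lemma dpc_unique (π π' : Equiv.Perm (Fin (n + 2)))
    (hagree : ∀ i : Fin n, π (Fin.castLE (dpc_le n) i) = π' (Fin.castLE (dpc_le n) i))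
    (h1 : Even (π ⟨n, dpc_lt0 n⟩).val) (h2 : Odd (π ⟨n + 1, dpc_lt1 n⟩).val)
    (h1' : Even (π' ⟨n, dpc_lt0 n⟩).val) (h2' : Odd (π' ⟨n + 1, dpc_lt1 n⟩).val) :
    π = π' := by
  have hA : π ⟨n, dpc_lt0 n⟩ = π' ⟨n, dpc_lt0 n⟩ := by
    set x : Fin (n + 2) := π'.symm (π ⟨n, dpc_lt0 n⟩) with hxdef
    have hpx : π' x = π ⟨n, dpc_lt0 n⟩ := Equiv.apply_symm_apply _ _
    rcases dpc_tri n x with h | h | h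
    · exfalso
      have hx : x = Fin.castLE (dpc_le n) (⟨x.val, h⟩ : Fin n) := Fin.ext rfl
      rw [hx, ← hagree] at hpx
      have h' := π.injective hpx
      rw [Fin.ext_iff] at h'
      simp only [Fin.coe_castLE] at h'
      omega
    · rw [← hpx, h]
    · exfalso
      rw [h] at hpx
      rw [← hpx] at h1
      rw [Nat.even_iff] at h1
      rw [Nat.odd_iff] at h2'
      omega
  have hB : π ⟨n + 1, dpc_lt1 n⟩ = π' ⟨n + 1, dpc_lt1 n⟩ := by
    set x : Fin (n + 2) := π'.symm (π ⟨n + 1, dpc_lt1 n⟩) with hxdef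
    have hpx : π' x = π ⟨n + 1, dpc_lt1 n⟩ := Equiv.apply_symm_apply _ _
    rcases dpc_tri n x with h | h | h
    · exfalso
      have hx : x = Fin.castLE (dpc_le n) (⟨x.val, h⟩ : Fin n) := Fin.ext rfl
      rw [hx, ← hagree] at hpx
      have h' := π.injective hpx
      rw [Fin.ext_iff] at h'
      simp only [Fin.coe_castLE] at h'
      omega
    · exfalso
      rw [h, ← hA] at hpx
      have h' := π.injective hpx
      rw [Fin.ext_iff] at h'
      simp only at h'
      omega
    · rw [← hpx, h]
  apply Equiv.ext
  intro y
  rcases dpc_tri n y with h | h | h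
  · have hy : y = Fin.castLE (dpc_le n) (⟨y.val, h⟩ : Fin n) := Fin.ext rfl
    rw [hy, hagree]
  · rw [h]; exact hA
  · rw [h]; exact hB

lemma dpc_choose_eq (f : Fin n → Fin (n + 2))
    (h : ∃ π : Equiv.Perm (Fin (n + 2)),
        (∀ i : Fin n, π (Fin.castLE (dpc_le n) i) = f i) ∧
        Even (π ⟨n, dpc_lt0 n⟩).val ∧ Odd (π ⟨n + 1, dpc_lt1 n⟩).val ∧
        Equiv.Perm.sign π = 1)
    (π : Equiv.Perm (Fin (n + 2)))
    (hπ : (∀ i : Fin n, π (Fin.castLE (dpc_le n) i) = f i) ∧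
        Even (π ⟨n, dpc_lt0 n⟩).val ∧ Odd (π ⟨n + 1, dpc_lt1 n⟩).val) :
    h.choose = π :=
  dpc_unique n _ _ (fun i => (h.choose_spec.1 i).trans (hπ.1 i).symm)
    h.choose_spec.2.1 h.choose_spec.2.2.1 hπ.2.1 hπ.2.2

noncomputable def dpc_equiv :
    {π : Equiv.Perm (Fin (n + 2)) //
      Even (π ⟨n, dpc_lt0 n⟩).val ∧ Odd (π ⟨n + 1, dpc_lt1 n⟩).val ∧ Equiv.Perm.sign π = 1} ≃
    {f : Fin n → Fin (n + 2) //
      Function.Injective f ∧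
      ∃ π : Equiv.Perm (Fin (n + 2)),
        (∀ i : Fin n, π (Fin.castLE (dpc_le n) i) = f i) ∧
        Even (π ⟨n, dpc_lt0 n⟩).val ∧ Odd (π ⟨n + 1, dpc_lt1 n⟩).val ∧
        Equiv.Perm.sign π = 1} where
  toFun x := ⟨fun i => x.1 (Fin.castLE (dpc_le n) i),
    fun i j hij => Fin.castLE_injective _ (x.1.injective hij),
    x.1, fun _ => rfl, x.2⟩
  invFun y := ⟨y.2.2.choose, y.2.2.choose_spec.2⟩
  left_inv x := by
    obtain ⟨π, h1, h2, h3⟩ := x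
    apply Subtype.ext
    exact dpc_choose_eq n _ _ π ⟨fun _ => rfl, h1, h2⟩
  right_inv y := Subtype.ext (funext fun i => y.2.2.choose_spec.1 i)

lemma dpc_halve (h2 : 2 ≤ n) :
    2 * Fintype.card {π : Equiv.Perm (Fin (n + 2)) //
        Even (π ⟨n, dpc_lt0 n⟩).val ∧ Odd (π ⟨n + 1, dpc_lt1 n⟩).val ∧ Equiv.Perm.sign π = 1}
    = Fintype.card {π : Equiv.Perm (Fin (n + 2)) //
        Even (π ⟨n, dpc_lt0 n⟩).val ∧ Odd (π ⟨n + 1, dpc_lt1 n⟩).val} := by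
  classical
  rw [Fintype.card_subtype, Fintype.card_subtype]
  have h01 : (0 : Fin (n + 2)) ≠ 1 := by
    simp [Fin.ext_iff]
  have hfix : ∀ (π : Equiv.Perm (Fin (n + 2))) (x : Fin (n + 2)),
      x.val = n ∨ x.val = n + 1 → (π * Equiv.swap 0 1 : Equiv.Perm (Fin (n + 2))) x = π x := by
    intro π x hx
    rw [Equiv.Perm.mul_apply, Equiv.swap_apply_of_ne_of_ne]
    · intro h; rw [h] at hx; simp at hx; omega
    · intro h; rw [h] at hx; simp [Fin.val_one] at hx; omega
  have hsign : ∀ π : Equiv.Perm (Fin (n + 2)),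
      Equiv.Perm.sign (π * Equiv.swap 0 1) = - Equiv.Perm.sign π := by
    intro π
    rw [Equiv.Perm.sign_mul, Equiv.Perm.sign_swap h01]
    exact mul_neg_one _
  set C : Equiv.Perm (Fin (n + 2)) → Prop := fun π =>
    Even (π ⟨n, dpc_lt0 n⟩).val ∧ Odd (π ⟨n + 1, dpc_lt1 n⟩).val with hC
  have hCmul : ∀ π, C (π * Equiv.swap 0 1) ↔ C π := by
    intro π
    rw [hC]
    simp only
    rw [hfix π ⟨n, dpc_lt0 n⟩ (Or.inl rfl), hfix π ⟨n + 1, dpc_lt1 n⟩ (Or.inr rfl)]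
  have hkey : (univ.filter fun π => C π ∧ Equiv.Perm.sign π = 1).card
      = (univ.filter fun π => C π ∧ Equiv.Perm.sign π = -1).card := by
    apply Finset.card_bij (fun π _ => π * Equiv.swap 0 1)
    · intro π hπ
      simp only [mem_filter, mem_univ, true_and] at hπ ⊢
      rw [hCmul, hsign, hπ.2]
      exact ⟨hπ.1, rfl⟩
    · intro a _ b _ hab
      exact mul_right_cancel hab
    · intro σ hσ
      simp only [mem_filter, mem_univ, true_and] at hσ
      refine ⟨σ * Equiv.swap 0 1, ?_, ?_⟩
      · simp only [mem_filter, mem_univ, true_and]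
        rw [hCmul, hsign, hσ.2]
        exact ⟨hσ.1, rfl⟩
      · rw [mul_assoc, Equiv.swap_mul_self, mul_one]
  have hsplit : (univ.filter fun π => C π)
      = (univ.filter fun π => C π ∧ Equiv.Perm.sign π = 1)
        ∪ (univ.filter fun π => C π ∧ Equiv.Perm.sign π = -1) := by
    ext π
    simp only [mem_filter, mem_union, mem_univ, true_and]
    rcases Int.units_eq_one_or (Equiv.Perm.sign π) with h | h <;> simp [h] <;> tauto
  have hdisj : Disjoint (univ.filter fun π => C π ∧ Equiv.Perm.sign π = 1)
      (univ.filter fun π => C π ∧ Equiv.Perm.sign π = -1) := by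
    rw [Finset.disjoint_filter]
    rintro π - ⟨-, h1⟩ ⟨-, h2⟩
    rw [h1] at h2
    exact absurd h2 (by decide)
  have e1 : (univ.filter fun π : Equiv.Perm (Fin (n + 2)) =>
      Even (π ⟨n, dpc_lt0 n⟩).val ∧ Odd (π ⟨n + 1, dpc_lt1 n⟩).val ∧ Equiv.Perm.sign π = 1)
      = (univ.filter fun π => C π ∧ Equiv.Perm.sign π = 1) := by
    apply Finset.filter_congr
    intro π _
    simp only [hC]
    tauto
  rw [e1]
  have : (univ.filter fun π : Equiv.Perm (Fin (n + 2)) =>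
      Even (π ⟨n, dpc_lt0 n⟩).val ∧ Odd (π ⟨n + 1, dpc_lt1 n⟩).val)
      = (univ.filter fun π => C π) := rfl
  rw [this, hsplit, Finset.card_union_of_disjoint hdisj, ← hkey]
  ring

lemma dpc_cardq (hn : Even n) (p : Fin (n + 2)) :
    Fintype.card {q : Fin (n + 1) //
        Even ((Equiv.swap 0 p q.succ).val) ∧ Odd p.val}
      = if Odd p.val then (n + 2) / 2 else 0 := by
  classical
  by_cases hp : Odd p.val
  · rw [if_pos hp]
    have hp1 : p.val % 2 = 1 := Nat.odd_iff.mp hp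
    have hn2 : n % 2 = 0 := Nat.even_iff.mp hn
    have hiff : ∀ q : Fin (n + 1),
        (Even ((Equiv.swap 0 p q.succ).val) ∧ Odd p.val) ↔ (q.succ = p ∨ Odd q.val) := by
      intro q
      by_cases hq : q.succ = p
      · rw [hq, Equiv.swap_apply_right]
        simp [hp]
      · rw [Equiv.swap_apply_of_ne_of_ne (Fin.succ_ne_zero q) hq]
        simp only [Fin.val_succ, hq, false_or, Nat.even_add_one, Nat.not_even_iff_odd]
        tauto
    have hstep : Fintype.card {q : Fin (n + 1) //
          Even ((Equiv.swap 0 p q.succ).val) ∧ Odd p.val}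
        = (univ.filter fun q : Fin (n + 1) => q.succ = p ∨ Odd q.val).card := by
      rw [Fintype.card_subtype]
      exact congrArg Finset.card (Finset.filter_congr (fun q _ => hiff q))
    rw [hstep, Finset.filter_or, Finset.card_union_of_disjoint]
    · have hone : (univ.filter fun q : Fin (n + 1) => q.succ = p)
          = {(⟨p.val - 1, by omega⟩ : Fin (n + 1))} := by
        ext q
        simp only [mem_filter, mem_univ, true_and, Finset.mem_singleton, Fin.ext_iff,
          Fin.val_succ]
        omega
      rw [hone, Finset.card_singleton, dpc_card_fin_filter_odd]
      omega
    · rw [Finset.disjoint_filter]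
      intro q _ hq hodd
      rw [Fin.ext_iff, Fin.val_succ] at hq
      rw [Nat.odd_iff] at hodd
      omega
  · rw [if_neg hp, Fintype.card_eq_zero_iff]
    exact ⟨fun q => hp q.2.2⟩

def dpc_reassoc {A B C : Type*} (R : A → B → Prop) :
    {x : A × B × C // R x.1 x.2.1} ≃ {y : A × B // R y.1 y.2} × C where
  toFun x := (⟨(x.1.1, x.1.2.1), x.2⟩, x.1.2.2)
  invFun y := ⟨(y.1.1.1, y.1.1.2, y.2), y.1.2⟩
  left_inv _ := rfl
  right_inv _ := rfl

def dpc_toSigma {A B : Type*} (R : A → B → Prop) :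
    {y : A × B // R y.1 y.2} ≃ Σ p : A, {q // R p q} where
  toFun y := ⟨y.1.1, y.1.2, y.2⟩
  invFun s := ⟨(s.1, s.2.1), s.2.2⟩
  left_inv _ := rfl
  right_inv _ := rfl

lemma dpc_cardT (hn : Even n) :
    Fintype.card {π : Equiv.Perm (Fin (n + 2)) //
        Even (π ⟨n, dpc_lt0 n⟩).val ∧ Odd (π ⟨n + 1, dpc_lt1 n⟩).val}
      = n.factorial * ((n + 2) / 2) ^ 2 := by
  classical
  -- move conditions to positions 0 and 1
  have hrev1 : Fin.rev (1 : Fin (n + 2)) = ⟨n, dpc_lt0 n⟩ := by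
    apply Fin.ext
    rw [Fin.val_rev]
    simp [Fin.val_one]
  have hrev0 : Fin.rev (0 : Fin (n + 2)) = ⟨n + 1, dpc_lt1 n⟩ := by
    apply Fin.ext
    rw [Fin.val_rev]
    simp
  have e1 : {π : Equiv.Perm (Fin (n + 2)) //
        Even (π ⟨n, dpc_lt0 n⟩).val ∧ Odd (π ⟨n + 1, dpc_lt1 n⟩).val}
      ≃ {σ : Equiv.Perm (Fin (n + 2)) // Even (σ 1).val ∧ Odd (σ 0).val} := by
    apply Equiv.subtypeEquiv (Equiv.mulRight Fin.revPerm)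
    intro π
    simp only [Equiv.coe_mulRight, Equiv.Perm.mul_apply, Fin.revPerm_apply, hrev0, hrev1]
  -- decompose
  set D : Equiv.Perm (Fin (n + 2)) ≃ Fin (n + 2) × Fin (n + 1) × Equiv.Perm (Fin n) :=
    Equiv.Perm.decomposeFin.trans ((Equiv.refl (Fin (n + 2))).prodCongr
      Equiv.Perm.decomposeFin) with hD
  have hDsymm : ∀ (p : Fin (n + 2)) (q : Fin (n + 1)) (e : Equiv.Perm (Fin n)),
      D.symm (p, q, e)
        = Equiv.Perm.decomposeFin.symm (p, Equiv.Perm.decomposeFin.symm (q, e)) := by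
    intro p q e
    simp only [hD, Equiv.symm_trans_apply, Equiv.prodCongr_symm, Equiv.refl_symm,
      Equiv.prodCongr_apply, Equiv.coe_refl, Prod.map_apply, id_eq]
  have e2 : {x : Fin (n + 2) × Fin (n + 1) × Equiv.Perm (Fin n) //
        Even ((Equiv.swap 0 x.1 x.2.1.succ).val) ∧ Odd x.1.val}
      ≃ {σ : Equiv.Perm (Fin (n + 2)) // Even (σ 1).val ∧ Odd (σ 0).val} := by
    apply Equiv.subtypeEquiv D.symm
    rintro ⟨p, q, e⟩
    rw [hDsymm, Equiv.Perm.decomposeFin_symm_apply_one,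
      Equiv.Perm.decomposeFin_symm_apply_zero, Equiv.Perm.decomposeFin_symm_apply_zero]
  have e3 := (dpc_reassoc (fun (a : Fin (n + 2)) (b : Fin (n + 1)) =>
      Even ((Equiv.swap 0 a b.succ).val) ∧ Odd a.val)).trans
    ((dpc_toSigma (fun (a : Fin (n + 2)) (b : Fin (n + 1)) =>
      Even ((Equiv.swap 0 a b.succ).val) ∧ Odd a.val)).prodCongr
      (Equiv.refl (Equiv.Perm (Fin n))))
  rw [Fintype.card_congr (e1.trans e2.symm), Fintype.card_congr e3,
    Fintype.card_prod, Fintype.card_sigma, Fintype.card_perm, Fintype.card_fin]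
  have hsum : ∀ p : Fin (n + 2), Fintype.card {q : Fin (n + 1) //
      Even ((Equiv.swap 0 p q.succ).val) ∧ Odd p.val}
      = if Odd p.val then (n + 2) / 2 else 0 := dpc_cardq n hn
  rw [Finset.sum_congr rfl (fun p _ => hsum p), Finset.sum_ite, Finset.sum_const,
    Finset.sum_const_zero, add_zero, smul_eq_mul, dpc_card_fin_filter_odd]
  ring

end


/-- For `n` even and positive: the number of injective `n`-tuples from
`{1,...,n+2}` whose two missing values have different parities and whose
associated full permutation (missing values appended even-then-odd) is even
equals `(1/2)·n!·((n+2)/2)²`, and the ratio of this count to `(n+2)!/2`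
equals `1/4 + 1/(4(n+1))`. -/
theorem double_parity_count (n : ℕ) (hn : Even n) (hpos : 0 < n) :
    let count : ℕ := Nat.card {f : Fin n → Fin (n + 2) //
      Function.Injective f ∧
      ∃ π : Equiv.Perm (Fin (n + 2)),
        (∀ i : Fin n, π (Fin.castLE (by omega) i) = f i) ∧
        Even (π ⟨n, by omega⟩).val ∧ Odd (π ⟨n + 1, by omega⟩).val ∧
        Equiv.Perm.sign π = 1}
    2 * count = n.factorial * ((n + 2) / 2) ^ 2 ∧
    (count : ℚ) / (((n + 2).factorial : ℚ) / 2) =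
      1 / 4 + 1 / (4 * (n + 1)) := by
  intro count
  have h2n : 2 ≤ n := by
    obtain ⟨m, hm⟩ := hn; omega
  have hcount : 2 * count = n.factorial * ((n + 2) / 2) ^ 2 := by
    have h1 : count = Fintype.card {π : Equiv.Perm (Fin (n + 2)) //
        Even (π ⟨n, by omega⟩).val ∧ Odd (π ⟨n + 1, by omega⟩).val ∧
        Equiv.Perm.sign π = 1} := by
      show Nat.card _ = _
      rw [Nat.card_congr (dpc_equiv n).symm, Nat.card_eq_fintype_card]
    rw [h1, dpc_halve n h2n, dpc_cardT n hn]
  refine ⟨hcount, ?_⟩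
  clear_value count
  obtain ⟨m, rfl⟩ := hn
  have hk : (m + m + 2) / 2 = m + 1 := by omega
  rw [hk] at hcount
  have hfac : (m + m + 2).factorial = (m + m + 2) * ((m + m + 1) * (m + m).factorial) := by
    rw [Nat.factorial_succ, Nat.factorial_succ]
  have hc : (count : ℚ) = ((m + m).factorial : ℚ) * (m + 1) ^ 2 / 2 := by
    have h := congrArg (Nat.cast : ℕ → ℚ) hcount
    push_cast at h
    linarith
  rw [hc, hfac]
  have h1 : ((m : ℚ) + m + 2) ≠ 0 := by positivity
  have h2 : ((m : ℚ) + m + 1) ≠ 0 := by positivity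
  have h3 : (((m + m).factorial : ℚ)) ≠ 0 := Nat.cast_ne_zero.mpr (Nat.factorial_ne_zero _)
  push_cast
  field_simp
  ring
end

section
/- For any natural numbers u < v < w, the quantity bit(u,w) equals exactly one of bit(u,v) or bit(v,w), and bit(u,v) ≠ bit(v,w). -/
lemma my_testBit_log2 {x : ℕ} (hx : x ≠ 0) : x.testBit x.log2 = true := by
  have h1 : 2 ^ x.log2 ≤ x := Nat.log2_self_le hx
  have h2 : x < 2 ^ (x.log2 + 1) := (Nat.log2_lt hx).mp (Nat.lt_succ_self _)
  have hdiv : x / 2 ^ x.log2 = 1 := by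
    apply Nat.div_eq_of_lt_le
    · simpa using h1
    · simpa [pow_succ, mul_comm] using h2
  simp [Nat.testBit_eq_decide_div_mod_eq, hdiv]

lemma my_testBit_high {x m : ℕ} (hm : x.log2 < m) : x.testBit m = false := by
  rcases eq_or_ne x 0 with rfl | hx
  · simp
  · exact Nat.testBit_lt_two_pow ((Nat.log2_lt hx).mp hm)

lemma my_log2_eq {x i : ℕ} (h1 : x.testBit i = true)
    (h2 : ∀ m, i < m → x.testBit m = false) : x.log2 = i := by
  have hx : x ≠ 0 := by
    rintro rfl; simp at h1
  rcases lt_trichotomy x.log2 i with h | h | h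
  · have := my_testBit_high (x := x) h
    rw [h1] at this; simp at this
  · exact h
  · have := h2 _ h
    rw [my_testBit_log2 hx] at this; simp at this

lemma my_msb_facts {a b : ℕ} (hab : a < b) :
    a.testBit (Nat.log2 (a ^^^ b)) = false ∧
    b.testBit (Nat.log2 (a ^^^ b)) = true ∧
    ∀ m, Nat.log2 (a ^^^ b) < m → a.testBit m = b.testBit m := by
  set k := Nat.log2 (a ^^^ b) with hk
  have hne : a ^^^ b ≠ 0 := by
    simp only [ne_eq, xor_eq_zero_iff]
    omega
  have hbit : (a ^^^ b).testBit k = true := my_testBit_log2 hne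
  rw [Nat.testBit_xor] at hbit
  have hagree : ∀ m, k < m → a.testBit m = b.testBit m := by
    intro m hm
    have := my_testBit_high (x := a ^^^ b) hm
    rw [Nat.testBit_xor] at this
    simpa using this
  have hdiff : a.testBit k ≠ b.testBit k := by
    intro h; rw [h] at hbit; simp at hbit
  cases ha : a.testBit k
  · refine ⟨rfl, ?_, hagree⟩
    cases hb : b.testBit k
    · rw [ha, hb] at hdiff; exact absurd rfl hdiff
    · rfl
  · exfalso
    have hb : b.testBit k = false := by
      cases hb : b.testBit k
      · rfl
      · rw [ha, hb] at hdiff; exact absurd rfl hdiff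
    have : b < a := Nat.lt_of_testBit k hb ha (fun j hj => (hagree j hj).symm)
    omega

/-- For `u < v < w`, writing `bit a b` for the index of the most significant
bit in which `a` and `b` differ, we have `bit u v ≠ bit v w`, and `bit u w`
equals exactly one of `bit u v` or `bit v w`. -/
theorem bit_trichotomy (u v w : ℕ) (huv : u < v) (hvw : v < w) :
    Nat.log2 (u ^^^ v) ≠ Nat.log2 (v ^^^ w) ∧
    (Nat.log2 (u ^^^ w) = Nat.log2 (u ^^^ v) ∨
      Nat.log2 (u ^^^ w) = Nat.log2 (v ^^^ w)) := by
  obtain ⟨hu1, hv1, hag1⟩ := my_msb_facts huv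
  obtain ⟨hv2, hw2, hag2⟩ := my_msb_facts hvw
  set k1 := Nat.log2 (u ^^^ v)
  set k2 := Nat.log2 (v ^^^ w)
  have hne : k1 ≠ k2 := by
    intro h; rw [h, hv2] at hv1; simp at hv1
  refine ⟨hne, ?_⟩
  rcases lt_or_gt_of_ne hne with h | h
  · -- k1 < k2 : bit u w = k2
    right
    apply my_log2_eq
    · rw [Nat.testBit_xor, hag1 k2 h, hv2, hw2]; rfl
    · intro m hm
      rw [Nat.testBit_xor, hag1 m (h.trans hm), hag2 m hm]
      simp
  · -- k2 < k1 : bit u w = k1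
    left
    apply my_log2_eq
    · rw [Nat.testBit_xor, hu1, ← hag2 k1 h, hv1]; rfl
    · intro m hm
      rw [Nat.testBit_xor, hag1 m hm, hag2 m (h.trans hm)]
      simp
end

section
/- Let B ≥ 1 and k ≥ 2. Consider the Tenengolts code C of sequences (b_1,...,b_{k-1}) with entries in Z/B satisfying Σ b_i ≡ 0 (mod B) and Σ_{i : b_i < b_{i+1}} i ≡ 0 (mod k+1) (comparisons via representatives in {0,...,B-1}). Then C is a single-deletion-correcting code: no two distinct sequences in C become equal after deleting one element from each. -/
/-- Delete the entry at position `j` from a tuple of length `m`, yielding a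
tuple of length `m - 1`. -/
def deleteAt {α : Type*} {m : ℕ} (b : Fin m → α) (j : Fin m) :
    Fin (m - 1) → α :=
  fun i =>
    if (i : ℕ) < (j : ℕ) then b ⟨i, by have := i.isLt; omega⟩
    else b ⟨(i : ℕ) + 1, by have := i.isLt; omega⟩

/-- The Tenengolts code condition for a sequence `(b_1, ..., b_{k-1})` over
`ℤ/B`: the entries sum to `0 (mod B)`, and the sum of the (1-based) indices
`i` with `b_i < b_{i+1}` (comparing representatives in `{0,...,B-1}`) is
`0 (mod k+1)`. -/
def TenengoltsCode (B k : ℕ) (b : Fin (k - 1) → ZMod B) : Prop :=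
  (∑ i, b i = 0) ∧
  (∑ i : Fin (k - 2),
      (if (b ⟨i, by have := i.isLt; omega⟩).val <
          (b ⟨(i : ℕ) + 1, by have := i.isLt; omega⟩).val
        then ((i : ℕ) + 1 : ZMod (k + 1)) else 0)) = 0


open Finset

def asc (v : ℕ → ℕ) (i : ℕ) : ℕ := if v i < v (i+1) then 1 else 0
def delS (v : ℕ → ℕ) (p : ℕ) (i : ℕ) : ℕ := if i < p then v i else v (i+1)

lemma asc_le_one (v : ℕ → ℕ) (i : ℕ) : asc v i ≤ 1 := by unfold asc; split <;> omega
lemma delS_lt {v : ℕ → ℕ} {p i : ℕ} (h : i < p) : delS v p i = v i := if_pos h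
lemma delS_ge {v : ℕ → ℕ} {p i : ℕ} (h : p ≤ i) : delS v p i = v (i+1) :=
  if_neg (by omega)
lemma asc_eq (v w : ℕ → ℕ) (i : ℕ) (h1 : v i = w i) (h2 : v (i+1) = w (i+1)) :
    asc v i = asc w i := by unfold asc; rw [h1, h2]

lemma claimA (N : ℕ) (hN : 2 ≤ N) (v : ℕ → ℕ) (p : ℕ) (hp : p ≤ N - 1) :
    ∃ q ≤ N - 2,
      (∀ i < q, asc v i = asc (delS v p) i) ∧
      (∀ i, q ≤ i → i < N - 2 → asc v (i+1) = asc (delS v p) i) := by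
  have hd : ∀ i, p ≤ i → asc (delS v p) i = asc v (i+1) := by
    intro i hi
    unfold asc
    rw [delS_ge hi, delS_ge (by omega)]
  have hd2 : ∀ i, i + 1 < p → asc (delS v p) i = asc v i := by
    intro i hi
    unfold asc
    rw [delS_lt (by omega), delS_lt hi]
  rcases Nat.eq_zero_or_pos p with hp0 | hp1
  · subst hp0
    exact ⟨0, by omega, fun i hi => by omega, fun i h1 h2 => (hd i (by omega)).symm⟩
  rcases eq_or_lt_of_le hp with hptop | hplt
  · -- p = N - 1
    exact ⟨N - 2, le_refl _, fun i hi => (hd2 i (by omega)).symm,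
      fun i h1 h2 => by omega⟩
  -- 1 ≤ p ≤ N - 2
  by_cases hcase : asc (delS v p) (p-1) = asc v (p-1)
  · refine ⟨p, by omega, fun i hi => ?_, fun i h1 h2 => ?_⟩
    · rcases eq_or_lt_of_le (Nat.le_sub_one_of_lt hi) with h | h
      · rw [h]; exact hcase.symm
      · exact (hd2 i (by omega)).symm
    · exact (hd i (by omega)).symm
  · refine ⟨p - 1, by omega, fun i hi => (hd2 i (by omega)).symm, fun i h1 h2 => ?_⟩
    rcases eq_or_lt_of_le h1 with h | h
    · -- i = p - 1 : show asc v p = asc (delS v p) (p-1)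
      subst h
      have h3 : p - 1 + 1 = p := by omega
      rw [h3]
      have e1 : delS v p (p-1) = v (p-1) := delS_lt (by omega)
      have e2 : delS v p (p-1+1) = v (p+1) := by rw [delS_ge (by omega), h3]
      unfold asc at hcase ⊢
      rw [e1, e2] at hcase ⊢
      rw [h3] at hcase
      split_ifs at hcase ⊢ <;> omega
    · exact (hd i (by omega)).symm

lemma checksum_split (N q : ℕ) (g e : ℕ → ℕ) (hN : 2 ≤ N) (hq : q ≤ N - 2)
    (h1 : ∀ i < q, g i = e i) (h2 : ∀ i, q ≤ i → i < N - 2 → g (i+1) = e i) :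
    ∑ i ∈ range (N-1), (i+1) * g i =
      ((∑ i ∈ range (N-2), (i+1) * e i) + (∑ i ∈ Ico q (N-2), e i)) + (q+1) * g q := by
  have hq1 : q < N - 1 := by omega
  have split1 : ∑ i ∈ range (N-1), (i+1) * g i =
      (∑ i ∈ range q, (i+1) * g i) + ((q+1) * g q + ∑ i ∈ Ico (q+1) (N-1), (i+1) * g i) := by
    rw [Finset.range_eq_Ico,
      ← Finset.sum_Ico_consecutive (fun i => (i+1) * g i) (Nat.zero_le q) (by omega : q ≤ N-1),
      ← Finset.insert_Ico_add_one_left_eq_Ico hq1, Finset.sum_insert (by simp), Finset.range_eq_Ico]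
  have split2 : ∑ i ∈ range (N-2), (i+1) * e i =
      (∑ i ∈ range q, (i+1) * e i) + ∑ i ∈ Ico q (N-2), (i+1) * e i := by
    rw [Finset.range_eq_Ico,
      ← Finset.sum_Ico_consecutive (fun i => (i+1) * e i) (Nat.zero_le q) (by omega : q ≤ N-2), Finset.range_eq_Ico]
  have hcongr : ∑ i ∈ range q, (i+1) * g i = ∑ i ∈ range q, (i+1) * e i :=
    Finset.sum_congr rfl (fun i hi => by rw [h1 i (Finset.mem_range.mp hi)])
  have hmain : ∑ i ∈ Ico (q+1) (N-1), (i+1) * g i =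
      ∑ i ∈ Ico q (N-2), ((i+1) * e i + e i) := by
    rw [Finset.sum_Ico_eq_sum_range, Finset.sum_Ico_eq_sum_range]
    have hlen : N - 1 - (q+1) = N - 2 - q := by omega
    rw [hlen]
    apply Finset.sum_congr rfl
    intro t ht
    have ht' : t < N - 2 - q := Finset.mem_range.mp ht
    have hidx : q + 1 + t = (q + t) + 1 := by omega
    rw [hidx, h2 (q+t) (by omega) (by omega)]
    ring
  rw [split1, split2, hcongr, hmain, Finset.sum_add_distrib]
  ring

/-- Binary VT uniqueness core. -/
lemma vt_core (M nn : ℕ) (e : ℕ → ℕ) (he : ∀ i, e i ≤ 1) (q q' u u' : ℕ)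
    (hq : q ≤ q') (hq' : q' ≤ nn) (hu : u ≤ 1) (hu' : u' ≤ 1) (hM : nn + 2 ≤ M)
    (h : (∑ i ∈ Finset.Ico q nn, e i) + (q+1)*u ≡
         (∑ i ∈ Finset.Ico q' nn, e i) + (q'+1)*u' [MOD M]) :
    u = u' ∧ ∀ i, q ≤ i → i < q' → e i = u := by
  set S := ∑ i ∈ Finset.Ico q q', e i with hS
  have hsplit : (∑ i ∈ Finset.Ico q nn, e i) =
      S + ∑ i ∈ Finset.Ico q' nn, e i := (Finset.sum_Ico_consecutive e hq hq').symm
  have hSle : S ≤ q' - q := by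
    calc S ≤ ∑ i ∈ Finset.Ico q q', 1 := Finset.sum_le_sum (fun i _ => he i)
    _ = q' - q := by simp
  have h2 : S + (q+1)*u ≡ (q'+1)*u' [MOD M] := by
    have := h
    rw [hsplit] at this
    have h3 : S + (q+1)*u + (∑ i ∈ Finset.Ico q' nn, e i) ≡
        (q'+1)*u' + (∑ i ∈ Finset.Ico q' nn, e i) [MOD M] := by
      calc S + (q+1)*u + (∑ i ∈ Finset.Ico q' nn, e i)
          = S + (∑ i ∈ Finset.Ico q' nn, e i) + (q+1)*u := by ring
        _ ≡ (∑ i ∈ Finset.Ico q' nn, e i) + (q'+1)*u' [MOD M] := this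
        _ = (q'+1)*u' + (∑ i ∈ Finset.Ico q' nn, e i) := by ring
    exact h3.add_right_cancel' _
  -- small mod: both sides < M
  have hlt1 : S + (q+1)*u ≤ nn + 1 := by
    rcases Nat.le_one_iff_eq_zero_or_eq_one.mp hu with h|h <;> subst h <;> omega
  have hlt2 : (q'+1)*u' ≤ nn + 1 := by
    rcases Nat.le_one_iff_eq_zero_or_eq_one.mp hu' with h|h <;> subst h <;> omega
  have heq : S + (q+1)*u = (q'+1)*u' := by
    have := h2
    unfold Nat.ModEq at this
    rwa [Nat.mod_eq_of_lt (by omega), Nat.mod_eq_of_lt (by omega)] at this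
  rcases Nat.le_one_iff_eq_zero_or_eq_one.mp hu with h|h <;> subst h <;>
    rcases Nat.le_one_iff_eq_zero_or_eq_one.mp hu' with h|h <;> subst h
  · -- u=0,u'=0 : S = 0
    refine ⟨rfl, fun i h1 h2 => ?_⟩
    have : S = 0 := by omega
    have := (Finset.sum_eq_zero_iff.mp this) i (by simp [Finset.mem_Ico]; omega)
    omega
  · omega
  · omega
  · -- u=1,u'=1 : S = q'-q, all ones
    refine ⟨rfl, fun i hi1 hi2 => ?_⟩
    have hSeq : S = q' - q := by omega
    by_contra hne
    have hei : e i = 0 := by have := he i; omega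
    have : S = ∑ x ∈ (Finset.Ico q q').erase i, e x := by
      rw [hS, ← Finset.add_sum_erase _ e (show i ∈ Finset.Ico q q' by simp [Finset.mem_Ico]; omega), hei, Nat.zero_add]
    have hle : ∑ x ∈ (Finset.Ico q q').erase i, e x ≤ ((Finset.Ico q q').erase i).card := by
      calc ∑ x ∈ (Finset.Ico q q').erase i, e x ≤ ∑ x ∈ (Finset.Ico q q').erase i, 1 :=
        Finset.sum_le_sum (fun j _ => he j)
      _ = _ := by simp
    rw [Finset.card_erase_of_mem (by simp [Finset.mem_Ico]; omega)] at hle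
    simp [Nat.card_Ico] at hle
    omega

lemma insert_agree (nn : ℕ) (g g' e : ℕ → ℕ) (q q' : ℕ) (hq : q ≤ q') (hq' : q' ≤ nn)
    (hA1 : ∀ i < q, g i = e i) (hA2 : ∀ i, q ≤ i → i < nn → g (i+1) = e i)
    (hB1 : ∀ i < q', g' i = e i) (hB2 : ∀ i, q' ≤ i → i < nn → g' (i+1) = e i)
    (huu : g q = g' q') (hwin : ∀ i, q ≤ i → i < q' → e i = g q) :
    ∀ i, i ≤ nn → g i = g' i := by
  intro i hi
  by_cases hiq : i < q
  · rw [hA1 i hiq, hB1 i (by omega)]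
  by_cases hieq : i = q
  · subst hieq
    by_cases hqq : i = q'
    · rw [hqq] at huu ⊢; exact huu
    · rw [hB1 i (by omega), hwin i (le_refl _) (by omega)]
  -- q < i
  obtain ⟨t, rfl⟩ : ∃ t, i = t + 1 := ⟨i - 1, by omega⟩
  rw [hA2 t (by omega) (by omega)]
  by_cases h1 : t + 1 < q'
  · rw [hB1 _ h1, hwin _ (by omega) (by omega), hwin _ (by omega) (by omega)]
  by_cases h2 : t + 1 = q'
  · rw [h2, ← huu, hwin t (by omega) (by omega)]
  · rw [hB2 t (by omega) (by omega)]

lemma chain_const (L : ℕ) (x : ℕ → ℕ) (hx : x (L+1) = x 0)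
    (h : ∀ t, t < L → asc x t = asc x (t+1)) : ∀ t, t ≤ L + 1 → x t = x 0 := by
  by_cases hc : x 0 < x 1
  · exfalso
    have hinc : ∀ t, t ≤ L → x t < x (t+1) := by
      intro t ht
      induction t with
      | zero => exact hc
      | succ u ih =>
        have h1 := h u (by omega)
        have h2 := ih (by omega)
        unfold asc at h1; split_ifs at h1 <;> omega
    have hlb : ∀ t, t ≤ L + 1 → x 0 + t ≤ x t := by
      intro t ht
      induction t with
      | zero => omega
      | succ u ih => have := hinc u (by omega); have := ih (by omega); omega
    have := hlb (L+1) (le_refl _)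
    omega
  · have hdec : ∀ t, t ≤ L → ¬ x t < x (t+1) := by
      intro t ht
      induction t with
      | zero => exact hc
      | succ u ih =>
        have h1 := h u (by omega)
        have h2 := ih (by omega)
        unfold asc at h1; split_ifs at h1 <;> omega
    have hub : ∀ t, t ≤ L + 1 → x t ≤ x 0 := by
      intro t ht
      induction t with
      | zero => omega
      | succ u ih => have := hdec u (by omega); have := ih (by omega); omega
    have hlb : ∀ r, r ≤ L + 1 → x (L + 1) ≤ x (L + 1 - r) := by
      intro r hr
      induction r with
      | zero => simp
      | succ u ih =>
        have h1 := ih (by omega)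
        have h2 := hdec (L - u) (by omega)
        have h3 : L - u + 1 = L + 1 - u := by omega
        have h4 : L + 1 - (u + 1) = L - u := by omega
        rw [h3] at h2
        rw [h4]
        omega
    intro t ht
    have h1 := hub t ht
    have h2 := hlb (L + 1 - t) (by omega)
    rw [show L + 1 - (L + 1 - t) = t from by omega] at h2
    omega
lemma core (N : ℕ) (bv cv : ℕ → ℕ) (jv j'v : ℕ)
    (hj : jv ≤ j'v) (hj' : j'v < N)
    (h1 : ∀ i, i < jv → bv i = cv i)
    (h2 : ∀ i, jv ≤ i → i < j'v → bv (i+1) = cv i)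
    (h3 : ∀ i, j'v ≤ i → i + 1 < N → bv (i+1) = cv (i+1))
    (hs : bv jv = cv j'v)
    (hT : (∑ i ∈ range (N-1), (i+1) * asc bv i) ≡
          (∑ i ∈ range (N-1), (i+1) * asc cv i) [MOD N+2]) :
    ∀ i, i < N → bv i = cv i := by
  rcases eq_or_lt_of_le hj with heq | hlt
  · subst heq
    intro i hi
    rcases lt_trichotomy i jv with h | h | h
    · exact h1 i h
    · subst h; exact hs
    · obtain ⟨t, rfl⟩ : ∃ t, i = t + 1 := ⟨i - 1, by omega⟩
      exact h3 t (by omega) (by omega)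
  have hN : 2 ≤ N := by omega
  set e : ℕ → ℕ := asc (delS bv jv) with he_def
  have hdc : ∀ i, i + 1 < N → delS bv jv i = delS cv j'v i := by
    intro i hi
    by_cases hi1 : i < jv
    · rw [delS_lt hi1, delS_lt (by omega), h1 i hi1]
    · by_cases hi2 : i < j'v
      · rw [delS_ge (by omega), delS_lt hi2, h2 i (by omega) hi2]
      · rw [delS_ge (by omega), delS_ge (by omega), h3 i (by omega) hi]
  have he : ∀ i, i < N - 2 → asc (delS cv j'v) i = e i := by
    intro i hi
    exact (asc_eq _ _ i (hdc i (by omega)) (hdc (i+1) (by omega))).symm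
  obtain ⟨q, hqle, hA1, hA2⟩ := claimA N hN bv jv (by omega)
  obtain ⟨q', hq'le, hB1c, hB2c⟩ := claimA N hN cv j'v (by omega)
  have hB1 : ∀ i < q', asc cv i = e i :=
    fun i hi => (hB1c i hi).trans (he i (by omega))
  have hB2 : ∀ i, q' ≤ i → i < N - 2 → asc cv (i+1) = e i :=
    fun i hi hi' => (hB2c i hi hi').trans (he i hi')
  have id1 := checksum_split N q (asc bv) e hN hqle hA1 hA2
  have id2 := checksum_split N q' (asc cv) e hN hq'le hB1 hB2
  set Te := ∑ i ∈ range (N-2), (i+1) * e i with hTe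
  have hT' : ((∑ i ∈ Ico q (N-2), e i) + (q+1) * asc bv q) ≡
      ((∑ i ∈ Ico q' (N-2), e i) + (q'+1) * asc cv q') [MOD N+2] := by
    apply Nat.ModEq.add_left_cancel (Nat.ModEq.refl Te)
    calc Te + ((∑ i ∈ Ico q (N-2), e i) + (q+1) * asc bv q)
        = ∑ i ∈ range (N-1), (i+1) * asc bv i := by rw [id1]; ring
      _ ≡ ∑ i ∈ range (N-1), (i+1) * asc cv i [MOD N+2] := hT
      _ = Te + ((∑ i ∈ Ico q' (N-2), e i) + (q'+1) * asc cv q') := by rw [id2]; ring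
  have he1 : ∀ i, e i ≤ 1 := fun i => asc_le_one _ i
  have hgg : ∀ i, i ≤ N - 2 → asc bv i = asc cv i := by
    rcases le_total q q' with hqq | hqq
    · obtain ⟨huu, hwin⟩ := vt_core (N+2) (N-2) e he1 q q' (asc bv q) (asc cv q')
        hqq hq'le (asc_le_one _ _) (asc_le_one _ _) (by omega) hT'
      exact insert_agree (N-2) (asc bv) (asc cv) e q q' hqq hq'le hA1 hA2 hB1 hB2
        huu (fun i hi1 hi2 => hwin i hi1 hi2)
    · obtain ⟨huu, hwin⟩ := vt_core (N+2) (N-2) e he1 q' q (asc cv q') (asc bv q)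
        hqq hqle (asc_le_one _ _) (asc_le_one _ _) (by omega) hT'.symm
      intro i hi
      exact (insert_agree (N-2) (asc cv) (asc bv) e q' q hqq hqle hB1 hB2 hA1 hA2
        huu (fun i hi1 hi2 => hwin i hi1 hi2) i hi).symm
  -- the chain argument
  set L := j'v - jv with hL
  set x : ℕ → ℕ := fun t => if t ≤ L then bv (jv + t) else cv j'v with hx_def
  have hx0 : x 0 = bv jv := by simp [hx_def]
  have hxL : x (L+1) = x 0 := by
    rw [hx0, hx_def]
    simp only [if_neg (by omega : ¬ L + 1 ≤ L)]
    exact hs.symm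
  have hchain : ∀ t, t < L → asc x t = asc x (t+1) := by
    intro t ht
    have e0 : x t = bv (jv + t) := if_pos (by omega)
    have e1 : x (t+1) = bv (jv + t + 1) := by
      rw [hx_def]; simp only
      rw [if_pos (by omega : t + 1 ≤ L)]
      rfl
    have e2 : x (t+1+1) = cv (jv + t + 1) := by
      by_cases h : t + 2 ≤ L
      · rw [hx_def]; simp only
        rw [if_pos (by omega : t + 1 + 1 ≤ L)]
        rw [show jv + (t+1+1) = (jv + t + 1) + 1 from by omega]
        exact h2 (jv + t + 1) (by omega) (by omega)
      · rw [hx_def]; simp only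
        rw [if_neg (by omega : ¬ t + 1 + 1 ≤ L)]
        congr 1; omega
    have ebt : asc x t = asc bv (jv + t) := by
      unfold asc; rw [e0, e1]
    have ect : asc x (t+1) = asc cv (jv + t) := by
      unfold asc
      rw [e1, e2, h2 (jv + t) (by omega) (by omega)]
    rw [ebt, ect]
    exact hgg (jv + t) (by omega)
  have hconst := chain_const L x hxL hchain
  have hbvconst : ∀ t, t ≤ L → bv (jv + t) = bv jv := by
    intro t ht
    have hxt : x t = bv (jv + t) := if_pos ht
    have := hconst t (by omega)
    rw [hxt, hx0] at this
    exact this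
  intro i hi
  by_cases hc1 : i < jv
  · exact h1 i hc1
  by_cases hc2 : i < j'v
  · have hb : bv i = bv jv := by
      have := hbvconst (i - jv) (by omega)
      rwa [show jv + (i - jv) = i from by omega] at this
    have hcc : cv i = bv jv := by
      rw [← h2 i (by omega) hc2]
      have := hbvconst (i + 1 - jv) (by omega)
      rwa [show jv + (i + 1 - jv) = i + 1 from by omega] at this
    rw [hb, hcc]
  by_cases hc3 : i = j'v
  · have hb : bv i = bv jv := by
      have := hbvconst L (le_refl _)
      rwa [show jv + L = i from by omega] at this
    rw [hb, hs, hc3]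
  · obtain ⟨t, rfl⟩ : ∃ t, i = t + 1 := ⟨i - 1, by omega⟩
    exact h3 t (by omega) (by omega)

lemma succAbove_val {n : ℕ} (p : Fin (n+1)) (i : Fin n) :
    ((p.succAbove i : Fin (n+1)) : ℕ) = if (i : ℕ) < (p : ℕ) then (i : ℕ) else (i : ℕ) + 1 := by
  rw [Fin.succAbove]
  by_cases h : (i : ℕ) < (p : ℕ)
  · rw [if_pos (by rwa [Fin.lt_def, Fin.coe_castSucc]), if_pos h, Fin.coe_castSucc]
  · rw [if_neg (by rwa [Fin.lt_def, Fin.coe_castSucc]), if_neg h, Fin.val_succ]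

lemma deleteAt_eq {α : Type*} {n : ℕ} (b : Fin (n+1) → α) (j : Fin (n+1)) (i : Fin n) :
    deleteAt b j i = b (j.succAbove i) := by
  unfold deleteAt
  by_cases h : (i : ℕ) < (j : ℕ)
  · rw [if_pos h]
    congr 1
    apply Fin.ext
    rw [succAbove_val, if_pos h]
  · rw [if_neg h]
    congr 1
    apply Fin.ext
    rw [succAbove_val, if_neg h]


set_option maxHeartbeats 1000000 in
/-- The Tenengolts code is single-deletion-correcting: two distinct codewords
can never become equal after deleting one element from each. -/
theorem tenengolts_single_deletion (B k : ℕ) (hB : 1 ≤ B) (hk : 2 ≤ k)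
    (b c : Fin (k - 1) → ZMod B)
    (hb : TenengoltsCode B k b) (hc : TenengoltsCode B k c) (hbc : b ≠ c)
    (j j' : Fin (k - 1)) :
    deleteAt b j ≠ deleteAt c j' := by
  obtain ⟨n, rfl⟩ : ∃ n, k = n + 2 := ⟨k - 2, by omega⟩
  haveI : NeZero B := ⟨by omega⟩
  intro hd
  apply hbc
  have hpt : ∀ i : Fin n, b (j.succAbove i) = c (j'.succAbove i) := by
    intro i
    rw [← deleteAt_eq b j i, ← deleteAt_eq c j' i, hd]
  have hsum : b j = c j' := by
    have h1 := Fin.sum_univ_succAbove b j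
    have h2 := Fin.sum_univ_succAbove c j'
    have hb1 : ∑ i : Fin (n+1), b i = 0 := hb.1
    have hc1 : ∑ i : Fin (n+1), c i = 0 := hc.1
    rw [hb1] at h1
    rw [hc1] at h2
    have h3 : ∑ i : Fin n, b (j.succAbove i) = ∑ i : Fin n, c (j'.succAbove i) :=
      Finset.sum_congr rfl (fun i _ => hpt i)
    have h4 : b j + ∑ i : Fin n, b (j.succAbove i)
        = c j' + ∑ i : Fin n, c (j'.succAbove i) := by rw [← h1, ← h2]
    rw [h3] at h4
    exact add_right_cancel h4
  set bv : ℕ → ℕ := fun t => if h : t < n+2-1 then (b ⟨t, h⟩).val else 0 with hbv_def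
  set cv : ℕ → ℕ := fun t => if h : t < n+2-1 then (c ⟨t, h⟩).val else 0 with hcv_def
  have hbv : ∀ i : Fin (n+2-1), bv (i : ℕ) = (b i).val := by
    intro i; rw [hbv_def]; simp only [dif_pos i.isLt, Fin.eta]
  have hcv : ∀ i : Fin (n+2-1), cv (i : ℕ) = (c i).val := by
    intro i; rw [hcv_def]; simp only [dif_pos i.isLt, Fin.eta]
  have hside : ∀ t, t < n →
      (if t < (j:ℕ) then bv t else bv (t+1)) = (if t < (j':ℕ) then cv t else cv (t+1)) := by
    intro t ht
    have h := congrArg ZMod.val (hpt ⟨t, ht⟩)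
    rw [← hbv (j.succAbove ⟨t, ht⟩), ← hcv (j'.succAbove ⟨t, ht⟩)] at h
    rw [succAbove_val, succAbove_val] at h
    rw [apply_ite bv, apply_ite cv] at h
    exact h
  have hs' : bv (j : ℕ) = cv (j' : ℕ) := by
    rw [hbv j, hcv j', hsum]
  have hTb : ((∑ t ∈ range n, (t+1) * asc bv t : ℕ) : ZMod (n+3)) =
      ∑ i : Fin n, (if (b ⟨(i:ℕ), by have := i.isLt; omega⟩).val <
          (b ⟨(i:ℕ) + 1, by have := i.isLt; omega⟩).val
        then ((i : ℕ) + 1 : ZMod (n+3)) else 0) := by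
    rw [Nat.cast_sum]
    rw [← Fin.sum_univ_eq_sum_range (fun t => (((t+1) * asc bv t : ℕ) : ZMod (n+3))) n]
    apply Finset.sum_congr rfl
    intro i _
    have e1 : (b ⟨(i:ℕ), by have := i.isLt; omega⟩).val = bv (i:ℕ) := by
      simp only [hbv_def]; rw [dif_pos (by have := i.isLt; omega : (i:ℕ) < n+2-1)]
    have e2 : (b ⟨(i:ℕ)+1, by have := i.isLt; omega⟩).val = bv ((i:ℕ)+1) := by
      simp only [hbv_def]; rw [dif_pos (by have := i.isLt; omega : (i:ℕ)+1 < n+2-1)]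
    rw [e1, e2]
    unfold asc
    split_ifs with hcond
    · push_cast; ring
    · simp
  have hTc : ((∑ t ∈ range n, (t+1) * asc cv t : ℕ) : ZMod (n+3)) =
      ∑ i : Fin n, (if (c ⟨(i:ℕ), by have := i.isLt; omega⟩).val <
          (c ⟨(i:ℕ) + 1, by have := i.isLt; omega⟩).val
        then ((i : ℕ) + 1 : ZMod (n+3)) else 0) := by
    rw [Nat.cast_sum]
    rw [← Fin.sum_univ_eq_sum_range (fun t => (((t+1) * asc cv t : ℕ) : ZMod (n+3))) n]
    apply Finset.sum_congr rfl
    intro i _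
    have e1 : (c ⟨(i:ℕ), by have := i.isLt; omega⟩).val = cv (i:ℕ) := by
      simp only [hcv_def]; rw [dif_pos (by have := i.isLt; omega : (i:ℕ) < n+2-1)]
    have e2 : (c ⟨(i:ℕ)+1, by have := i.isLt; omega⟩).val = cv ((i:ℕ)+1) := by
      simp only [hcv_def]; rw [dif_pos (by have := i.isLt; omega : (i:ℕ)+1 < n+2-1)]
    rw [e1, e2]
    unfold asc
    split_ifs with hcond
    · push_cast; ring
    · simp
  have hT : (∑ t ∈ range n, (t+1) * asc bv t) ≡
      (∑ t ∈ range n, (t+1) * asc cv t) [MOD n+3] := by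
    apply (ZMod.natCast_eq_natCast_iff _ _ _).mp
    have hb2 : (∑ i : Fin n, (if (b ⟨(i:ℕ), by have := i.isLt; omega⟩).val <
          (b ⟨(i:ℕ) + 1, by have := i.isLt; omega⟩).val
        then ((i : ℕ) + 1 : ZMod (n+3)) else 0)) = 0 := hb.2
    have hc2 : (∑ i : Fin n, (if (c ⟨(i:ℕ), by have := i.isLt; omega⟩).val <
          (c ⟨(i:ℕ) + 1, by have := i.isLt; omega⟩).val
        then ((i : ℕ) + 1 : ZMod (n+3)) else 0)) = 0 := hc.2
    rw [hTb, hTc, hb2, hc2]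
  have hcore : ∀ i, i < n + 1 → bv i = cv i := by
    rcases le_total (j : ℕ) (j' : ℕ) with hjj | hjj
    · apply core (n+1) bv cv (j : ℕ) (j' : ℕ) hjj (by have := j'.isLt; omega)
      · intro i hi
        have := hside i (by have := j'.isLt; omega)
        rwa [if_pos hi, if_pos (by omega)] at this
      · intro i hi1 hi2
        have := hside i (by have := j'.isLt; omega)
        rwa [if_neg (by omega), if_pos hi2] at this
      · intro i hi1 hi2
        have := hside i (by omega)
        rwa [if_neg (by omega), if_neg (by omega)] at this
      · exact hs'
      · exact hT
    · intro i hi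
      refine (core (n+1) cv bv (j' : ℕ) (j : ℕ) hjj (by have := j.isLt; omega)
        ?_ ?_ ?_ hs'.symm hT.symm i hi).symm
      · intro i hi
        have := hside i (by have := j.isLt; omega)
        rw [if_pos (by omega), if_pos hi] at this
        exact this.symm
      · intro i hi1 hi2
        have := hside i (by have := j.isLt; omega)
        rw [if_pos hi2, if_neg (by omega)] at this
        exact this.symm
      · intro i hi1 hi2
        have := hside i (by omega)
        rw [if_neg (by omega), if_neg (by omega)] at this
        exact this.symm
  funext i
  apply ZMod.val_injective B
  rw [← hbv i, ← hcv i]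
  exact hcore (i : ℕ) (by have := i.isLt; omega)
end
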